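/- Let f(Λ, λ, μ) = −tr(Λ) − μc subject to the constraint that the real symmetric block matrix [[Λ, λ],[λ^T, μ]] is positive semidefinite, with λ ∈ ℝ^Q fixed and c > 0. Then sup over feasible (Λ, μ) of f equals −2√c·‖λ‖, attained (when λ ≠ 0) at μ = ‖λ‖/√c and Λ = μ^{-1} λλ^T. -/

import Mathlib

open Matrix Finset

-- quadratic form of the block matrix
lemma quad_form {Q : ℕ} (Λ : Matrix (Fin Q) (Fin Q) ℝ) (μ : ℝ) (l : Fin Q → ℝ)
    (x : Fin Q ⊕ Fin 1 → ℝ) :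
    x ⬝ᵥ ((Matrix.fromBlocks Λ
          (Matrix.of fun q (_ : Fin 1) => l q)
          (Matrix.of fun (_ : Fin 1) q => l q)
          (Matrix.of fun (_ : Fin 1) (_ : Fin 1) => μ)) *ᵥ x) =
      (x ∘ Sum.inl) ⬝ᵥ (Λ *ᵥ (x ∘ Sum.inl))
        + 2 * x (Sum.inr 0) * (l ⬝ᵥ (x ∘ Sum.inl)) + μ * (x (Sum.inr 0))^2 := by
  simp [Matrix.dotProduct_block, Matrix.fromBlocks_mulVec, dotProduct, Matrix.mulVec,
    Fin.sum_univ_one, Finset.mul_sum, Finset.sum_mul, mul_add, add_mul, Finset.sum_add_distrib]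
  ring_nf
  rw [add_assoc, ← Finset.sum_add_distrib]
  congr 1
  exact Finset.sum_congr rfl fun i _ => by ring

lemma dot_vecMulVec {Q : ℕ} (l v : Fin Q → ℝ) :
    v ⬝ᵥ ((vecMulVec l l) *ᵥ v) = (l ⬝ᵥ v)^2 := by
  calc v ⬝ᵥ ((vecMulVec l l) *ᵥ v) = ∑ i, ∑ j, (l i * v i) * (l j * v j) := by
        simp only [dotProduct, Matrix.mulVec, Matrix.vecMulVec_apply, Finset.mul_sum]
        exact Finset.sum_congr rfl fun i _ => Finset.sum_congr rfl fun j _ => by ring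
    _ = (∑ i, l i * v i) * (∑ j, l j * v j) := (Finset.sum_mul_sum _ _ _ _).symm
    _ = (l ⬝ᵥ v)^2 := by rw [pow_two]; rfl

/-- maximizing `−tr(Λ) − μc` over real symmetric `Λ` and `μ ≥ 0` with
`[[Λ, λ],[λᵀ, μ]] ⪰ 0` yields the value `−2√c·‖λ‖`, attained (for `λ ≠ 0`) at
`μ = ‖λ‖/√c` and `Λ = μ⁻¹ λλᵀ`. -/
theorem dual_block_psd_sup
    (Q : ℕ) (c : ℝ) (hc : 0 < c) (l : Fin Q → ℝ) (hl : l ≠ 0) :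
    IsGreatest
      {x : ℝ | ∃ (Λ : Matrix (Fin Q) (Fin Q) ℝ) (μ : ℝ), Λ.IsSymm ∧ 0 ≤ μ ∧
        (Matrix.fromBlocks Λ
          (Matrix.of fun q (_ : Fin 1) => l q)
          (Matrix.of fun (_ : Fin 1) q => l q)
          (Matrix.of fun (_ : Fin 1) (_ : Fin 1) => μ)).PosSemidef ∧
        x = -Λ.trace - μ * c}
      (-2 * Real.sqrt c * Real.sqrt (∑ q, (l q) ^ 2)) ∧
    -((Real.sqrt (∑ q, (l q) ^ 2) / Real.sqrt c)⁻¹ •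
        vecMulVec l l : Matrix (Fin Q) (Fin Q) ℝ).trace
      - (Real.sqrt (∑ q, (l q) ^ 2) / Real.sqrt c) * c
      = -2 * Real.sqrt c * Real.sqrt (∑ q, (l q) ^ 2) := by
  set n : ℝ := ∑ q, (l q)^2 with hn_def
  obtain ⟨i0, hi0⟩ := Function.ne_iff.mp hl
  have hn : 0 < n := Finset.sum_pos' (fun i _ => sq_nonneg _)
    ⟨i0, Finset.mem_univ i0, by have h : l i0 ≠ 0 := hi0; positivity⟩
  set a : ℝ := Real.sqrt n with ha_def
  set b : ℝ := Real.sqrt c with hb_def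
  have ha : 0 < a := Real.sqrt_pos.mpr hn
  have hb : 0 < b := Real.sqrt_pos.mpr hc
  have ha2 : a^2 = n := Real.sq_sqrt hn.le
  have hb2 : b^2 = c := Real.sq_sqrt hc.le
  set μ₀ : ℝ := a / b with hμ₀_def
  have hμ₀ : 0 < μ₀ := div_pos ha hb
  have htr0 : (vecMulVec l l : Matrix (Fin Q) (Fin Q) ℝ).trace = n := by
    simp [Matrix.trace, Matrix.diag, Matrix.vecMulVec_apply, hn_def, pow_two]
  have hval : -((μ₀⁻¹ • vecMulVec l l : Matrix (Fin Q) (Fin Q) ℝ)).trace - μ₀ * c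
      = -2 * b * a := by
    rw [Matrix.trace_smul, htr0, smul_eq_mul, hμ₀_def, inv_div, ← ha2, ← hb2]
    field_simp
    ring
  refine ⟨⟨?_, ?_⟩, hval⟩
  · -- membership
    refine ⟨μ₀⁻¹ • vecMulVec l l, μ₀, ?_, hμ₀.le, posSemidef_iff_dotProduct_mulVec.mpr ⟨?_, ?_⟩, hval.symm⟩
    · exact Matrix.IsSymm.ext fun i j => by
        simp [Matrix.vecMulVec_apply, mul_comm]
    · rw [Matrix.isHermitian_fromBlocks_iff]
      refine ⟨?_, ?_, ?_, ?_⟩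
      · ext i j
        simp only [Matrix.conjTranspose_apply, Matrix.smul_apply, Matrix.vecMulVec_apply,
          star_trivial, smul_eq_mul]
        ring
      · ext i j; simp [Matrix.conjTranspose_apply]
      · ext i j; simp [Matrix.conjTranspose_apply]
      · ext i j; simp [Matrix.conjTranspose_apply]
    · intro x
      rw [star_trivial, quad_form]
      set v := x ∘ Sum.inl
      set t := x (Sum.inr 0)
      rw [Matrix.smul_mulVec, dotProduct_smul, dot_vecMulVec]
      set s := l ⬝ᵥ v
      rw [smul_eq_mul]
      have he : μ₀⁻¹ * s^2 + 2 * t * s + μ₀ * t^2 = (s + μ₀*t)^2 / μ₀ := by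
        field_simp
        ring
      rw [he]
      positivity
  · -- upper bound
    rintro x ⟨Λ, μ, hΛsymm, hμ, hpsd, rfl⟩
    have key : ∀ i, (l i)^2 ≤ Λ i i * μ := by
      intro i
      have hq : ∀ s : ℝ, 0 ≤ Λ i i * (s * s) + (2 * l i) * s + μ := by
        intro s
        have h := hpsd.dotProduct_mulVec_nonneg (Sum.elim (Pi.single i s) 1)
        rw [star_trivial, quad_form] at h
        have e1 : (Sum.elim (Pi.single i s) 1 : Fin Q ⊕ Fin 1 → ℝ) ∘ Sum.inl
            = Pi.single i s := rfl
        have e2 : (Sum.elim (Pi.single i s) 1 : Fin Q ⊕ Fin 1 → ℝ) (Sum.inr 0) = 1 := rfl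
        rw [e1, e2] at h
        rw [Matrix.mulVec_single, single_dotProduct, dotProduct_single] at h
        · simp only [Pi.smul_apply, Matrix.col_apply, op_smul_eq_mul] at h
          nlinarith [h]
      have hd := discrim_le_zero hq
      rw [discrim] at hd
      nlinarith [hd]
    have hμpos : 0 < μ := by
      rcases hμ.lt_or_eq with h | h
      · exact h
      · exfalso
        apply hl
        funext i
        have hk := key i
        rw [← h, mul_zero] at hk
        have h2 : l i ^ 2 = 0 := le_antisymm hk (sq_nonneg _)
        simpa using (pow_eq_zero_iff (by norm_num : (2:ℕ) ≠ 0)).mp h2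
    have htr : n ≤ Λ.trace * μ := by
      have : ∑ i, (l i)^2 ≤ ∑ i, Λ i i * μ := Finset.sum_le_sum fun i _ => key i
      rw [← Finset.sum_mul] at this
      simpa [Matrix.trace, Matrix.diag, hn_def] using this
    have e : μ^2 * b^2 = μ^2 * c := by rw [hb2]
    nlinarith [htr, hμpos, sq_nonneg (a - μ * b), ha2, e]
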